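/- Let A_i and A_j be affine subspaces of V with directions V_i = A_i − A_i and V_j = A_j − A_j, and let X₀ ∈ A_i ∩ A_j with X₀ ≠ 0. Suppose that the set ∪_{p,q ∈ {i,j}} (A_p + V_q) is transverse to the orbits of H. Then every S ∈ V_i + V_j satisfying X₀ᵀS + SᵀX₀ = 0 (i.e., (X₀)_ℓᵀ S_ℓ + S_ℓᵀ (X₀)_ℓ = 0 for every ℓ = 1,…,L) must be S = 0. Consequently, there exists c > 0 such that ‖X₀ᵀS + SᵀX₀‖ ≥ c for all S ∈ V_i + V_j with ‖S‖ = 1. -/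

import Mathlib

open scoped BigOperators
open Matrix

namespace GPR

variable {L : ℕ} {N R : Fin L → ℕ}

/-- The signal space: `L`-tuples of real `N ℓ × R ℓ` matrices. -/
abbrev V (N R : Fin L → ℕ) := ∀ ℓ : Fin L, Matrix (Fin (N ℓ)) (Fin (R ℓ)) ℝ

/-- Frobenius norm of a tuple of matrices: `(Σ_ℓ Σ_{i,j} (X_ℓ)_{ij}²)^{1/2}`. -/
noncomputable def fnorm {m n : Fin L → ℕ} (X : ∀ ℓ : Fin L, Matrix (Fin (m ℓ)) (Fin (n ℓ)) ℝ) : ℝ :=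
  Real.sqrt (∑ ℓ, ∑ i, ∑ j, (X ℓ i j) ^ 2)

/-- The group `H = ∏_ℓ O(N ℓ)`, as tuples of orthogonal matrices. -/
abbrev HGroup (N : Fin L → ℕ) := ∀ ℓ : Fin L, Matrix.orthogonalGroup (Fin (N ℓ)) ℝ

/-- The action of `H` on `V`: `(Q · X)_ℓ = Q_ℓ X_ℓ`. -/
def act (Q : HGroup N) (X : V N R) : V N R :=
  fun ℓ => (Q ℓ : Matrix (Fin (N ℓ)) (Fin (N ℓ)) ℝ) * X ℓ

/-- `d_σ(X,Y) = min(‖X−Y‖, ‖X+Y‖)`. -/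
noncomputable def dSigma (X Y : V N R) : ℝ := min (fnorm (X - Y)) (fnorm (X + Y))

/-- `d_H(X,Y) = min_{Q ∈ H} ‖X − Q·Y‖`. -/
noncomputable def dH (X Y : V N R) : ℝ := ⨅ Q : HGroup N, fnorm (X - act Q Y)

/-- The positive semidefinite square root `√(XᵀX)` of the Gram matrix of a single matrix. -/
noncomputable def gramSqrt {n d : ℕ} (X : Matrix (Fin n) (Fin d) ℝ) : Matrix (Fin d) (Fin d) ℝ :=
  (Matrix.posSemidef_conjTranspose_mul_self X).isHermitian.eigenvectorUnitary.1 *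
    Matrix.diagonal ((↑) ∘ (√·) ∘ (Matrix.posSemidef_conjTranspose_mul_self X).isHermitian.eigenvalues) *
    (star (Matrix.posSemidef_conjTranspose_mul_self X).isHermitian.eigenvectorUnitary : Matrix (Fin d) (Fin d) ℝ)

/-- The tuple `√(XᵀX) = (√(X₁ᵀX₁), …, √(X_LᵀX_L))`. -/
noncomputable def sqrtGram (X : V N R) : ∀ ℓ : Fin L, Matrix (Fin (R ℓ)) (Fin (R ℓ)) ℝ :=
  fun ℓ => gramSqrt (X ℓ)

/-- The second moment: tuple of Gram matrices `XᵀX = (X₁ᵀX₁, …, X_LᵀX_L)`. -/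
def gram (X : V N R) : ∀ ℓ : Fin L, Matrix (Fin (R ℓ)) (Fin (R ℓ)) ℝ :=
  fun ℓ => (X ℓ)ᵀ * X ℓ

/-- A set `S ⊆ V` is transverse to the orbits of `H` if whenever `X ∈ S` and `Q·X ∈ S`,
one has `Q·X = X` or `Q·X = −X`. -/
def Transverse (S : Set (V N R)) : Prop :=
  ∀ X ∈ S, ∀ Q : HGroup N, act Q X ∈ S → act Q X = X ∨ act Q X = -X

section Orth

open scoped RealInnerProductSpace

lemma dot_aux {n d : ℕ} (M : Matrix (Fin n) (Fin d) ℝ) (x y : EuclideanSpace ℝ (Fin d)) :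
    ⟪Matrix.toEuclideanLin M x, Matrix.toEuclideanLin M y⟫ =
      WithLp.equiv 2 _ x ⬝ᵥ ((Mᵀ * M) *ᵥ (WithLp.equiv 2 _ y)) := by
  simp only [PiLp.inner_apply, RCLike.inner_apply, conj_trivial, toEuclideanLin_apply,
    WithLp.equiv_apply]
  rw [← Matrix.mulVec_mulVec, Matrix.dotProduct_mulVec, Matrix.vecMul_transpose]
  exact Finset.sum_congr rfl fun _ _ => mul_comm _ _

lemma exists_orth {n d : ℕ} (A B : Matrix (Fin n) (Fin d) ℝ) (h : Aᵀ * A = Bᵀ * B) :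
    ∃ Q : Matrix.orthogonalGroup (Fin n) ℝ, (Q : Matrix (Fin n) (Fin n) ℝ) * B = A := by
  set a := Matrix.toEuclideanLin A with ha
  set b := Matrix.toEuclideanLin B with hb
  have hinner : ∀ x y, ⟪a x, a y⟫ = ⟪b x, b y⟫ := by
    intro x y; rw [ha, hb, dot_aux, dot_aux, h]
  have hnorm : ∀ x, ‖a x‖ = ‖b x‖ := by
    intro x
    rw [← sq_eq_sq₀ (norm_nonneg _) (norm_nonneg _), ← real_inner_self_eq_norm_sq,
      ← real_inner_self_eq_norm_sq, hinner]
  have hcongr : ∀ x y, b x = b y → a x = a y := by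
    intro x y hxy
    have h1 : ‖a (x - y)‖ = 0 := by
      rw [hnorm, map_sub, hxy, sub_self, norm_zero]
    have := norm_eq_zero.mp h1
    rw [map_sub, sub_eq_zero] at this
    exact this
  have sel : ∀ y : LinearMap.range b, ∃ x, b x = (y : EuclideanSpace ℝ (Fin n)) := fun y => y.2
  choose g hg using sel
  let φ : LinearMap.range b →ₗ[ℝ] EuclideanSpace ℝ (Fin n) :=
    { toFun := fun y => a (g y)
      map_add' := by
        intro y z
        rw [← map_add]
        apply hcongr
        rw [hg, map_add, hg, hg, Submodule.coe_add]
      map_smul' := by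
        intro c y
        rw [← _root_.map_smul, RingHom.id_apply]
        apply hcongr
        rw [hg, _root_.map_smul, hg, Submodule.coe_smul] }
  have hφ : ∀ y, ‖φ y‖ = ‖y‖ := by
    intro y
    show ‖a (g y)‖ = ‖y‖
    rw [hnorm, hg]
    rfl
  let q : EuclideanSpace ℝ (Fin n) →ₗᵢ[ℝ] EuclideanSpace ℝ (Fin n) :=
    LinearIsometry.extend ⟨φ, hφ⟩
  have hq : ∀ x, q (b x) = a x := by
    intro x
    have : q (b x) = φ ⟨b x, LinearMap.mem_range_self b x⟩ :=
      LinearIsometry.extend_apply ⟨φ, hφ⟩ ⟨b x, LinearMap.mem_range_self b x⟩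
    rw [this]
    exact hcongr _ _ (hg ⟨b x, LinearMap.mem_range_self b x⟩)
  set Q : Matrix (Fin n) (Fin n) ℝ := fun i j => q (EuclideanSpace.single j (1:ℝ)) i with hQ
  have hdecomp : ∀ v : EuclideanSpace ℝ (Fin n), v = ∑ j, v j • EuclideanSpace.single j (1:ℝ) := by
    intro v
    have := (EuclideanSpace.basisFun (Fin n) ℝ).sum_repr v
    simp only [EuclideanSpace.basisFun_apply, EuclideanSpace.basisFun_repr] at this
    exact this.symm
  have hmul : ∀ v : EuclideanSpace ℝ (Fin n), Q *ᵥ (WithLp.equiv 2 _ v) = WithLp.equiv 2 _ (q v) := by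
    intro v
    funext i
    have h1 : q v = ∑ j, v j • q (EuclideanSpace.single j (1:ℝ)) := by
      conv_lhs => rw [hdecomp v]
      rw [map_sum]
      simp
    have h2 : WithLp.equiv 2 (Fin n → ℝ) (q v) i = ∑ j, v j * q (EuclideanSpace.single j 1) i := by
      have h3 : (q v) i = (∑ j, v j • q (EuclideanSpace.single j (1:ℝ))) i := by rw [← h1]
      rw [show ((∑ j, v j • q (EuclideanSpace.single j (1:ℝ)))) i
          = ∑ j, (v j • q (EuclideanSpace.single j (1:ℝ))) i from by rw [WithLp.ofLp_sum]; exact Finset.sum_apply i _ _] at h3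
      simpa [PiLp.smul_apply] using h3
    rw [h2]
    simp [Matrix.mulVec, dotProduct, hQ, mul_comm]
  have horth : Qᵀ * Q = 1 := by
    ext j k
    have := q.inner_map_map (EuclideanSpace.single j (1:ℝ)) (EuclideanSpace.single k (1:ℝ))
    rw [EuclideanSpace.inner_single_left] at this
    simp only [PiLp.inner_apply, RCLike.inner_apply, conj_trivial] at this
    simp only [Matrix.mul_apply, Matrix.transpose_apply]
    simp only [hQ]
    simp only [mul_comm] at this ⊢
    rw [this]
    simp [EuclideanSpace.single_apply, Matrix.one_apply, eq_comm]
  have hmem : Q ∈ Matrix.orthogonalGroup (Fin n) ℝ := by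
    rw [Matrix.mem_orthogonalGroup_iff]
    exact mul_eq_one_comm.mpr horth
  refine ⟨⟨Q, hmem⟩, ?_⟩
  ext i k
  have hc : ∀ (M : Matrix (Fin n) (Fin d) ℝ),
      M *ᵥ (WithLp.equiv 2 _ (EuclideanSpace.single k (1:ℝ))) = fun j => M j k := by
    intro M
    funext j
    simp [Matrix.mulVec, dotProduct, EuclideanSpace.single_apply]
  have h1 : (Q * B) *ᵥ (WithLp.equiv 2 _ (EuclideanSpace.single k (1:ℝ))) =
      A *ᵥ (WithLp.equiv 2 _ (EuclideanSpace.single k (1:ℝ))) := by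
    rw [← Matrix.mulVec_mulVec]
    have hb1 : B *ᵥ (WithLp.equiv 2 _ (EuclideanSpace.single k (1:ℝ)))
        = WithLp.equiv 2 _ (b (EuclideanSpace.single k (1:ℝ))) := by
      rw [hb, toEuclideanLin_apply]; rfl
    rw [hb1, hmul, hq, ha, toEuclideanLin_apply]
    rfl
  have := congrFun (hc (Q * B) ▸ hc A ▸ h1) i
  exact this

end Orth

lemma fnorm_eq_zero_iff {L : ℕ} {m n : Fin L → ℕ}
    (X : ∀ ℓ : Fin L, Matrix (Fin (m ℓ)) (Fin (n ℓ)) ℝ) :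
    fnorm X = 0 ↔ X = 0 := by
  unfold fnorm
  rw [Real.sqrt_eq_zero (by positivity)]
  constructor
  · intro h
    funext ℓ i j
    have h1 := (Finset.sum_eq_zero_iff_of_nonneg (fun _ _ => by positivity)).mp h ℓ (Finset.mem_univ _)
    have h2 := (Finset.sum_eq_zero_iff_of_nonneg (fun _ _ => by positivity)).mp h1 i (Finset.mem_univ _)
    have h3 := (Finset.sum_eq_zero_iff_of_nonneg (fun _ _ => by positivity)).mp h2 j (Finset.mem_univ _)
    exact pow_eq_zero_iff two_ne_zero |>.mp h3
  · intro h
    rw [h]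
    simp


/-- If `X₀ ≠ 0` lies in `A i ∩ A j` and `∪_{p,q ∈ {i,j}} (A p + V q)` is
transverse to the orbits of `H`, then the only `S ∈ V i + V j` with `X₀ᵀS + SᵀX₀ = 0` is
`S = 0`; consequently `‖X₀ᵀS + SᵀX₀‖` is bounded below away from `0` on the unit sphere of
`V i + V j`. -/
theorem skew_deviation_pos_on_tangent
    (L : ℕ) (hL : 0 < L) (N R : Fin L → ℕ) (hN : ∀ ℓ, 0 < N ℓ) (hR : ∀ ℓ, 0 < R ℓ)
    (Ai Aj : AffineSubspace ℝ (V N R))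
    (X₀ : V N R) (hX₀i : X₀ ∈ (Ai : Set (V N R))) (hX₀j : X₀ ∈ (Aj : Set (V N R)))
    (hX₀ : X₀ ≠ 0)
    (htrans : Transverse (
      {x : V N R | ∃ a ∈ (Ai : Set (V N R)), ∃ v ∈ Ai.direction, x = a + v} ∪
      {x : V N R | ∃ a ∈ (Ai : Set (V N R)), ∃ v ∈ Aj.direction, x = a + v} ∪
      {x : V N R | ∃ a ∈ (Aj : Set (V N R)), ∃ v ∈ Ai.direction, x = a + v} ∪
      {x : V N R | ∃ a ∈ (Aj : Set (V N R)), ∃ v ∈ Aj.direction, x = a + v})) :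
    (∀ S ∈ (Ai.direction ⊔ Aj.direction : Submodule ℝ (V N R)),
      (∀ ℓ, (X₀ ℓ)ᵀ * S ℓ + (S ℓ)ᵀ * X₀ ℓ = 0) → S = 0) ∧
    (∃ c : ℝ, 0 < c ∧ ∀ S ∈ (Ai.direction ⊔ Aj.direction : Submodule ℝ (V N R)),
      fnorm S = 1 → c ≤ fnorm (fun ℓ => (X₀ ℓ)ᵀ * S ℓ + (S ℓ)ᵀ * X₀ ℓ)) := by
  have part1 : ∀ S ∈ (Ai.direction ⊔ Aj.direction : Submodule ℝ (V N R)),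
      (∀ ℓ, (X₀ ℓ)ᵀ * S ℓ + (S ℓ)ᵀ * X₀ ℓ = 0) → S = 0 := by
    intro S hS hskew
    obtain ⟨si, hsi, sj, hsj, hsum⟩ := Submodule.mem_sup.mp hS
    have hplus : X₀ + S ∈ (
        {x : V N R | ∃ a ∈ (Ai : Set (V N R)), ∃ v ∈ Ai.direction, x = a + v} ∪
        {x : V N R | ∃ a ∈ (Ai : Set (V N R)), ∃ v ∈ Aj.direction, x = a + v} ∪
        {x : V N R | ∃ a ∈ (Aj : Set (V N R)), ∃ v ∈ Ai.direction, x = a + v} ∪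
        {x : V N R | ∃ a ∈ (Aj : Set (V N R)), ∃ v ∈ Aj.direction, x = a + v}) := by
      apply Set.mem_union_left
      apply Set.mem_union_left
      apply Set.mem_union_right
      refine ⟨si +ᵥ X₀, AffineSubspace.vadd_mem_of_mem_direction hsi hX₀i, sj, hsj, ?_⟩
      rw [vadd_eq_add, ← hsum]
      abel
    have hminus : X₀ - S ∈ (
        {x : V N R | ∃ a ∈ (Ai : Set (V N R)), ∃ v ∈ Ai.direction, x = a + v} ∪
        {x : V N R | ∃ a ∈ (Ai : Set (V N R)), ∃ v ∈ Aj.direction, x = a + v} ∪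
        {x : V N R | ∃ a ∈ (Aj : Set (V N R)), ∃ v ∈ Ai.direction, x = a + v} ∪
        {x : V N R | ∃ a ∈ (Aj : Set (V N R)), ∃ v ∈ Aj.direction, x = a + v}) := by
      apply Set.mem_union_left
      apply Set.mem_union_left
      apply Set.mem_union_right
      refine ⟨(-si) +ᵥ X₀, AffineSubspace.vadd_mem_of_mem_direction (neg_mem hsi) hX₀i,
        -sj, neg_mem hsj, ?_⟩
      rw [vadd_eq_add, ← hsum]
      abel
    have hgram : ∀ ℓ, ((X₀ + S) ℓ)ᵀ * ((X₀ + S) ℓ) = ((X₀ - S) ℓ)ᵀ * ((X₀ - S) ℓ) := by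
      intro ℓ
      have hc : (X₀ ℓ)ᵀ * S ℓ = -((S ℓ)ᵀ * X₀ ℓ) := eq_neg_of_add_eq_zero_left (hskew ℓ)
      simp only [Pi.add_apply, Pi.sub_apply, transpose_add, transpose_sub]
      rw [Matrix.add_mul, Matrix.mul_add, Matrix.mul_add, Matrix.sub_mul, Matrix.mul_sub, Matrix.mul_sub, hc]
      abel
    choose Q hQ using fun ℓ => exists_orth ((X₀ + S) ℓ) ((X₀ - S) ℓ) (hgram ℓ)
    have hact : act Q (X₀ - S) = X₀ + S := by
      funext ℓ
      exact hQ ℓ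
    rcases htrans (X₀ - S) hminus Q (by rw [hact]; exact hplus) with h | h
    · rw [hact] at h
      funext ℓ i j
      have h' := congrFun (congrFun (congrFun h ℓ) i) j
      simp only [Pi.add_apply, Pi.sub_apply, Matrix.add_apply, Matrix.sub_apply] at h'
      show S ℓ i j = (0 : V N R) ℓ i j
      simp only [Pi.zero_apply, Matrix.zero_apply]
      linarith
    · rw [hact] at h
      exfalso
      apply hX₀
      funext ℓ i j
      have h' := congrFun (congrFun (congrFun h ℓ) i) j
      simp only [Pi.add_apply, Pi.sub_apply, Pi.neg_apply, Matrix.add_apply, Matrix.sub_apply,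
        Matrix.neg_apply] at h'
      show X₀ ℓ i j = (0 : V N R) ℓ i j
      simp only [Pi.zero_apply, Matrix.zero_apply]
      linarith
  refine ⟨part1, ?_⟩
  -- Part 2: compactness argument
  haveI iT2 : T2Space (V N R) :=
    inferInstanceAs (T2Space (∀ ℓ : Fin L, Fin (N ℓ) → Fin (R ℓ) → ℝ))
  haveI iTAG : IsTopologicalAddGroup (V N R) :=
    inferInstanceAs (IsTopologicalAddGroup (∀ ℓ : Fin L, Fin (N ℓ) → Fin (R ℓ) → ℝ))
  haveI iCS : ContinuousSMul ℝ (V N R) :=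
    inferInstanceAs (ContinuousSMul ℝ (∀ ℓ : Fin L, Fin (N ℓ) → Fin (R ℓ) → ℝ))
  haveI iFD : FiniteDimensional ℝ (V N R) :=
    inferInstanceAs (FiniteDimensional ℝ (∀ ℓ : Fin L, Fin (N ℓ) → Fin (R ℓ) → ℝ))
  set W : Submodule ℝ (V N R) := Ai.direction ⊔ Aj.direction with hW
  set g : V N R → ℝ := fun S => fnorm (fun ℓ => (X₀ ℓ)ᵀ * S ℓ + (S ℓ)ᵀ * X₀ ℓ) with hg
  have hfnc : Continuous (fun S : V N R => fnorm S) := by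
    unfold fnorm
    apply Real.continuous_sqrt.comp
    refine continuous_finset_sum _ fun ℓ _ => continuous_finset_sum _ fun i _ =>
      continuous_finset_sum _ fun j _ => Continuous.pow ?_ 2
    exact (continuous_apply j).comp ((continuous_apply i).comp (continuous_apply ℓ))
  have hgc : Continuous g := by
    rw [hg]
    unfold fnorm
    apply Real.continuous_sqrt.comp
    refine continuous_finset_sum _ fun ℓ _ => continuous_finset_sum _ fun i _ =>
      continuous_finset_sum _ fun j _ => Continuous.pow ?_ 2
    show Continuous fun S : V N R => ((X₀ ℓ)ᵀ * S ℓ + (S ℓ)ᵀ * X₀ ℓ) i j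
    simp only [Matrix.add_apply, Matrix.mul_apply, Matrix.transpose_apply]
    apply Continuous.add
    · exact continuous_finset_sum _ fun k _ => continuous_const.mul
        ((continuous_apply j).comp ((continuous_apply k).comp (continuous_apply ℓ)))
    · exact continuous_finset_sum _ fun k _ => by fun_prop
  set K : Set (V N R) := {S | S ∈ W ∧ fnorm S = 1} with hK
  have hKclosed : IsClosed K := by
    have : K = (W : Set (V N R)) ∩ ((fun S : V N R => fnorm S) ⁻¹' {1}) := rfl
    rw [this]
    exact W.closed_of_finiteDimensional.inter (isClosed_singleton.preimage hfnc)
  have hCcomp : IsCompact (Set.pi Set.univ (fun ℓ : Fin L =>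
      Set.pi Set.univ (fun _ : Fin (N ℓ) =>
        Set.pi Set.univ (fun _ : Fin (R ℓ) => Set.Icc (-1:ℝ) 1))) : Set (V N R)) :=
    isCompact_univ_pi fun ℓ => isCompact_univ_pi fun i => isCompact_univ_pi fun j => isCompact_Icc
  have hKsub : K ⊆ (Set.pi Set.univ (fun ℓ : Fin L =>
      Set.pi Set.univ (fun _ : Fin (N ℓ) =>
        Set.pi Set.univ (fun _ : Fin (R ℓ) => Set.Icc (-1:ℝ) 1))) : Set (V N R)) := by
    rintro S ⟨-, hS1⟩
    intro ℓ _
    intro i _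
    intro j _
    have hsum : (∑ ℓ, ∑ i, ∑ j, (S ℓ i j) ^ 2) = 1 := by
      have := hS1
      unfold fnorm at this
      exact Real.sqrt_eq_one.mp this
    have hle : (S ℓ i j) ^ 2 ≤ 1 := by
      rw [← hsum]
      have t1 : (S ℓ i j) ^ 2 ≤ ∑ j, (S ℓ i j) ^ 2 :=
        Finset.single_le_sum (f := fun j => (S ℓ i j) ^ 2)
          (fun _ _ => by positivity) (Finset.mem_univ j)
      have t2 : (∑ j, (S ℓ i j) ^ 2) ≤ ∑ i, ∑ j, (S ℓ i j) ^ 2 :=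
        Finset.single_le_sum (f := fun i => ∑ j, (S ℓ i j) ^ 2)
          (fun _ _ => by positivity) (Finset.mem_univ i)
      have t3 : (∑ i, ∑ j, (S ℓ i j) ^ 2) ≤ ∑ ℓ, ∑ i, ∑ j, (S ℓ i j) ^ 2 :=
        Finset.single_le_sum (f := fun ℓ => ∑ i, ∑ j, (S ℓ i j) ^ 2)
          (fun _ _ => by positivity) (Finset.mem_univ ℓ)
      linarith
    constructor <;> nlinarith [sq_nonneg (S ℓ i j)]
  have hKcomp : IsCompact K := hCcomp.of_isClosed_subset hKclosed hKsub
  rcases Set.eq_empty_or_nonempty K with hKe | hKne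
  · refine ⟨1, one_pos, ?_⟩
    intro S hSW hS1
    exact absurd (show S ∈ K from ⟨hSW, hS1⟩) (by rw [hKe]; exact Set.notMem_empty S)
  · obtain ⟨S₀, hS₀K, hmin⟩ := hKcomp.exists_isMinOn hKne hgc.continuousOn
    refine ⟨g S₀, ?_, ?_⟩
    · rcases hS₀K with ⟨hS₀W, hS₀1⟩
      have hS₀ne : S₀ ≠ 0 := by
        intro h0
        rw [h0, (fnorm_eq_zero_iff (0 : V N R)).mpr rfl] at hS₀1
        norm_num at hS₀1
      have hTne : (fun ℓ => (X₀ ℓ)ᵀ * S₀ ℓ + (S₀ ℓ)ᵀ * X₀ ℓ) ≠ 0 := by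
        intro h0
        exact hS₀ne (part1 S₀ hS₀W fun ℓ => congrFun h0 ℓ)
      have := (fnorm_eq_zero_iff (fun ℓ => (X₀ ℓ)ᵀ * S₀ ℓ + (S₀ ℓ)ᵀ * X₀ ℓ)).not.mpr hTne
      have hnn : 0 ≤ g S₀ := Real.sqrt_nonneg _
      exact lt_of_le_of_ne hnn (Ne.symm this)
    · intro S hSW hS1
      exact hmin (show S ∈ K from ⟨hSW, hS1⟩)

end GPR
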